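/- Let (X,μ) be a probability space, G and H countable groups, and α: X × G → H a measurable map. Fix g ∈ G and let 𝒫 = {P_{g,h} : h ∈ H} where P_{g,h} = {x ∈ X : α(x,g) = h}. Suppose for every h ∈ H there is a countable measurable partition {D_n^h}_{n∈ℕ} of P_{g,h} such that for every n there is a finite set F_n ⊂ H with D_n^h = ∅ whenever h ∉ F_n, and such that ∑_{n=1}^∞ −μ(⋃_{h∈F_n} D_n^h) · log( μ(⋃_{h∈F_n} D_n^h) / |F_n| ) < ∞. Then the Shannon entropy ∑_{h∈H} −μ(P_{g,h}) log μ(P_{g,h}) of 𝒫 is finite. -/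

import Mathlib

open MeasureTheory

lemma equip_aux {H : Type*} (s : Finset H) (a : H → ℝ) (ha : ∀ h ∈ s, 0 ≤ a h) :
    ∑ h ∈ s, Real.negMulLog (a h) ≤
      -(∑ h ∈ s, a h) * Real.log ((∑ h ∈ s, a h) / s.card) := by
  rcases s.eq_empty_or_nonempty with rfl | hs
  · simp
  have hc : (0:ℝ) < s.card := by exact_mod_cast Finset.card_pos.mpr hs
  have jensen := Real.concaveOn_negMulLog.le_map_sum (t := s) (w := fun _ => (s.card:ℝ)⁻¹)
    (p := a) (fun i _ => by positivity)
    (by rw [Finset.sum_const, nsmul_eq_mul]; field_simp) (fun i hi => ha i hi)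
  have h1 : ∑ i ∈ s, (s.card:ℝ)⁻¹ • Real.negMulLog (a i)
      = (s.card:ℝ)⁻¹ * ∑ h ∈ s, Real.negMulLog (a h) := by
    simp only [smul_eq_mul, ← Finset.mul_sum]
  have h2 : ∑ i ∈ s, (s.card:ℝ)⁻¹ • a i = (∑ h ∈ s, a h) / s.card := by
    simp only [smul_eq_mul, ← Finset.mul_sum]; ring
  rw [h1, h2] at jensen
  have := mul_le_mul_of_nonneg_left jensen hc.le
  rw [← mul_assoc, mul_inv_cancel₀ hc.ne', one_mul] at this
  refine this.trans_eq ?_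
  rw [Real.negMulLog]
  field_simp

theorem stmt0 {X : Type*} [MeasurableSpace X] (μ : Measure X) [IsProbabilityMeasure μ]
    {G H : Type*} [Countable G] [Countable H]
    (α : X → G → H) (hαmeas : ∀ (g : G) (h : H), MeasurableSet {x | α x g = h}) (g : G)
    (P : H → Set X) (hP : ∀ h, P h = {x | α x g = h})
    (D : ℕ → H → Set X) (hDmeas : ∀ n h, MeasurableSet (D n h))
    (hDdisj : ∀ h, Pairwise (Function.onFun Disjoint fun n => D n h))
    (hDunion : ∀ h, (⋃ n, D n h) = P h)
    (F : ℕ → Finset H)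
    (hF : ∀ n, ∀ h, h ∉ F n → D n h = ∅)
    (hsum : Summable fun n =>
      -(μ (⋃ h ∈ F n, D n h)).toReal *
        Real.log ((μ (⋃ h ∈ F n, D n h)).toReal / (F n).card)) :
    Summable fun h => -(μ (P h)).toReal * Real.log (μ (P h)).toReal := by
  classical
  set a : ℕ → H → ℝ := fun n h => (μ (D n h)).toReal with ha_def
  have ha_nonneg : ∀ n h, 0 ≤ a n h := fun n h => ENNReal.toReal_nonneg
  -- D n h ⊆ P h
  have hDsub : ∀ n h, D n h ⊆ P h := fun n h => by
    rw [← hDunion h]; exact Set.subset_iUnion (fun n => D n h) n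
  -- P pairwise disjoint
  have hPdisj : Pairwise (Function.onFun Disjoint P) := by
    intro h1 h2 hne
    rw [Function.onFun, Set.disjoint_left]
    intro x hx1 hx2
    rw [hP h1] at hx1; rw [hP h2] at hx2
    exact hne (hx1.symm.trans hx2)
  -- μ (P h) as a tsum
  have hPm : ∀ h, μ (P h) = ∑' n, μ (D n h) := fun h => by
    rw [← hDunion h, measure_iUnion (hDdisj h) (fun n => hDmeas n h)]
  have hsum_a : ∀ h, Summable (fun n => a n h) := fun h => by
    apply ENNReal.summable_toReal
    rw [← hPm h]; exact measure_ne_top μ _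
  have htsum_a : ∀ h, ∑' n, a n h = (μ (P h)).toReal := fun h => by
    rw [hPm h, ENNReal.tsum_toReal_eq (fun n => measure_ne_top μ _)]
  -- measure of union over F n
  have hsn : ∀ n, (μ (⋃ h ∈ F n, D n h)).toReal = ∑ h ∈ F n, a n h := by
    intro n
    rw [measure_biUnion_finset ?_ (fun h _ => hDmeas n h)]
    · exact ENNReal.toReal_sum (fun h _ => measure_ne_top μ _)
    · intro h1 h1m h2 h2m hne
      exact Set.disjoint_of_subset (hDsub n h1) (hDsub n h2) (hPdisj hne)
  set c : ℕ → ℝ := fun n =>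
    -(μ (⋃ h ∈ F n, D n h)).toReal *
      Real.log ((μ (⋃ h ∈ F n, D n h)).toReal / (F n).card) with hc_def
  -- basic bounds
  have hPle1 : ∀ h, (μ (P h)).toReal ≤ 1 := fun h => by
    simpa using ENNReal.toReal_mono (by simp) (prob_le_one (μ := μ) (s := P h))
  have hale : ∀ n h, a n h ≤ (μ (P h)).toReal :=
    fun n h => ENNReal.toReal_mono (measure_ne_top μ _) (measure_mono (hDsub n h))
  -- the key per-n bound
  set b : ℕ → H → ℝ := fun n h => a n h * (-Real.log (μ (P h)).toReal) with hb_def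
  have hb_nonneg : ∀ n h, 0 ≤ b n h := by
    intro n h
    apply mul_nonneg (ha_nonneg n h)
    simp only [neg_nonneg]
    exact Real.log_nonpos ENNReal.toReal_nonneg (hPle1 h)
  have hkey : ∀ (S : Finset H) (n : ℕ), ∑ h ∈ S, b n h ≤ c n := by
    intro S n
    have step1 : ∀ h, b n h ≤ Real.negMulLog (a n h) := by
      intro h
      rcases eq_or_lt_of_le (ha_nonneg n h) with h0 | h0
      · simp [hb_def, ← h0]
      · have hm := mul_le_mul_of_nonneg_left (Real.log_le_log h0 (hale n h)) (ha_nonneg n h)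
        simp only [hb_def, Real.negMulLog, neg_mul, mul_neg]
        exact neg_le_neg hm
    have step2 : ∑ h ∈ S, b n h ≤ ∑ h ∈ S, Real.negMulLog (a n h) :=
      Finset.sum_le_sum (fun h _ => step1 h)
    have hzero : ∀ h, h ∉ F n → Real.negMulLog (a n h) = 0 := by
      intro h hh
      simp [ha_def, hF n h hh]
    have step3 : ∑ h ∈ S, Real.negMulLog (a n h) = ∑ h ∈ S ∩ F n, Real.negMulLog (a n h) := by
      refine (Finset.sum_subset (Finset.inter_subset_left) ?_).symm
      intro x hx hnx
      exact hzero x (fun hxF => hnx (Finset.mem_inter.mpr ⟨hx, hxF⟩))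
    have step4 : ∑ h ∈ S ∩ F n, Real.negMulLog (a n h) ≤ ∑ h ∈ F n, Real.negMulLog (a n h) := by
      refine Finset.sum_le_sum_of_subset_of_nonneg (Finset.inter_subset_right) ?_
      intro h hh _
      exact Real.negMulLog_nonneg (ha_nonneg n h) ((hale n h).trans (hPle1 h))
    have step5 := equip_aux (F n) (a n) (fun h _ => ha_nonneg n h)
    rw [hc_def]
    simp only [hsn n]
    calc ∑ h ∈ S, b n h ≤ ∑ h ∈ S ∩ F n, Real.negMulLog (a n h) := step2.trans_eq step3
      _ ≤ ∑ h ∈ F n, Real.negMulLog (a n h) := step4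
      _ ≤ _ := step5
  -- summability of b in n, for each h
  have hb_summ : ∀ h, Summable (fun n => b n h) := fun h =>
    (hsum_a h).mul_right _
  have htsum_b : ∀ h, ∑' n, b n h = -(μ (P h)).toReal * Real.log (μ (P h)).toReal := by
    intro h
    rw [tsum_mul_right, htsum_a h]; ring
  -- final bound: partial sums bounded by ∑' c
  apply summable_of_sum_le (c := ∑' n, c n)
  · intro h
    have := Real.negMulLog_nonneg (x := (μ (P h)).toReal) ENNReal.toReal_nonneg (hPle1 h)
    rw [Real.negMulLog] at this
    exact this
  · intro S
    have e1 : ∑ h ∈ S, -(μ (P h)).toReal * Real.log (μ (P h)).toReal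
        = ∑' n, ∑ h ∈ S, b n h := by
      rw [Summable.tsum_finsetSum (fun h _ => hb_summ h)]
      exact Finset.sum_congr rfl (fun h _ => (htsum_b h).symm)
    rw [e1]
    exact Summable.tsum_le_tsum (hkey S) (summable_sum (fun h _ => hb_summ h)) hsum
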